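/- Let k be a field of characteristic not 2, R = k[α], R^s = k[α^2]. Then there is an isomorphism of R-bimodules (R ⊗_{R^s} R) ⊗_R (R ⊗_{R^s} R) ≅ (R ⊗_{R^s} R) ⊕ (R ⊗_{R^s} R). (This categorifies the relation b_s^2 = (v + v^{-1})b_s in the Hecke algebra of S_2.) -/

import Mathlib

/-!
Soergel bimodules for SL₂: k a field of characteristic ≠ 2, R = k[α] (α = Polynomial.X),
R^s = k[α²] the invariants of α ↦ −α, and B_s = R ⊗_{R^s} R.
-/

open TensorProduct Polynomial

noncomputable section

variable (k : Type) [Field k]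

/-- The invariant subring R^s = k[α²] ⊆ R = k[α]. -/
def Rs : Subalgebra k (Polynomial k) := Algebra.adjoin k {(Polynomial.X : Polynomial k) ^ 2}

/-- The Soergel bimodule B_s = R ⊗_{R^s} R (as a commutative ring; the left action of R is
multiplication by f ⊗ 1 and the right action is multiplication by 1 ⊗ f). -/
abbrev Bs : Type := (Polynomial k) ⊗[Rs k] (Polynomial k)

/-- α/2 ∈ R. -/
def half : Polynomial k := Polynomial.C ((2 : k)⁻¹) * Polynomial.X

/-- Δ_s = (α/2) ⊗ 1 + 1 ⊗ (α/2) ∈ B_s. -/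
def Δs : Bs k := half k ⊗ₜ[Rs k] 1 + 1 ⊗ₜ[Rs k] half k

set_option maxHeartbeats 1000000
set_option synthInstance.maxHeartbeats 400000

variable {k}

lemma coeff_comp_negX (p : Polynomial k) (n : ℕ) :
    (p.comp (-X)).coeff n = (-1) ^ n * p.coeff n := by
  induction p using Polynomial.induction_on' with
  | add p q hp hq => simp [hp, hq, mul_add]
  | monomial m a =>
    rw [Polynomial.monomial_comp, neg_pow, show ((-1 : Polynomial k) = C (-1)) by simp,
      ← Polynomial.C_pow, mul_left_comm, Polynomial.coeff_C_mul, Polynomial.coeff_C_mul,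
      Polynomial.coeff_X_pow, Polynomial.coeff_monomial]
    by_cases h : n = m
    · subst h; simp
    · simp [h, Ne.symm h]

lemma comp_negX_negX (p : Polynomial k) : (p.comp (-X)).comp (-X) = p := by
  rw [Polynomial.comp_assoc]
  simp

lemma mem_Rs_comp (r : Polynomial k) (hr : r ∈ Rs k) : r.comp (-X) = r := by
  induction hr using Algebra.adjoin_induction with
  | mem x hx => simp_all
  | algebraMap a => simp [Polynomial.algebraMap_eq]
  | add a b _ _ ha hb => simp [ha, hb]
  | mul a b _ _ ha hb => simp [ha, hb]

set_option maxHeartbeats 1600000 in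
lemma even_mem_Rs (hchar : ringChar k ≠ 2) (p : Polynomial k) (hp : p.comp (-X) = p) :
    p ∈ Rs k := by
  have h2 : (2 : k) ≠ 0 := Ring.two_ne_zero hchar
  have hodd : ∀ n, Odd n → p.coeff n = 0 := by
    intro n hn
    have h := coeff_comp_negX p n
    rw [hp, hn.neg_one_pow] at h
    have h' : (2 : k) * p.coeff n = 0 := by linear_combination h
    exact (mul_eq_zero.mp h').resolve_left h2
  have key : (∑ i ∈ p.support, C (p.coeff i) * X ^ i) ∈ Rs k := by
    refine Subalgebra.sum_mem _ fun i hi => ?_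
    have hie : Even i := by
      by_contra hodd'
      exact Polynomial.mem_support_iff.mp hi (hodd i (Nat.not_even_iff_odd.mp hodd'))
    obtain ⟨m, hm⟩ := hie
    subst hm
    rw [← two_mul, pow_mul]
    have hC : C (p.coeff (2 * m)) ∈ Rs k := by
      have := (Rs k).smul_mem (one_mem (Rs k)) (p.coeff (2 * m))
      rwa [Polynomial.smul_eq_C_mul, mul_one] at this
    have hX : (X : Polynomial k) ^ 2 ∈ Rs k := Algebra.subset_adjoin (Set.mem_singleton _)
    exact mul_mem hC (pow_mem hX m)
  rwa [← p.as_sum_support_C_mul_X_pow] at key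

variable (k) in
def Eop (g : Polynomial k) : Polynomial k := C (2⁻¹ : k) * (g + g.comp (-X))

variable (k) in
def Oop' (g : Polynomial k) : Polynomial k := C (2⁻¹ : k) * (g - g.comp (-X))

variable (k) in
def Oop (g : Polynomial k) : Polynomial k := (Oop' k g).divX

lemma Eop_even (g : Polynomial k) : (Eop k g).comp (-X) = Eop k g := by
  rw [Eop, Polynomial.mul_comp, Polynomial.add_comp, Polynomial.C_comp, comp_negX_negX]
  ring

lemma Oop'_odd (g : Polynomial k) : (Oop' k g).comp (-X) = -Oop' k g := by
  rw [Oop', Polynomial.mul_comp, Polynomial.sub_comp, Polynomial.C_comp, comp_negX_negX]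
  ring

lemma Oop'_coeff_zero (g : Polynomial k) : (Oop' k g).coeff 0 = 0 := by
  rw [Oop', Polynomial.coeff_C_mul, Polynomial.coeff_sub, coeff_comp_negX]
  simp

lemma X_mul_Oop (g : Polynomial k) : X * Oop k g = Oop' k g := by
  have h := Polynomial.X_mul_divX_add (Oop' k g)
  rwa [Oop'_coeff_zero, Polynomial.C_0, add_zero] at h

lemma Oop_even (g : Polynomial k) : (Oop k g).comp (-X) = Oop k g := by
  ext n
  rw [coeff_comp_negX, Oop, Polynomial.coeff_divX]
  have h := congrArg (fun q => Polynomial.coeff q (n + 1)) (Oop'_odd g)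
  simp only [coeff_comp_negX, Polynomial.coeff_neg] at h
  rw [pow_succ] at h
  linear_combination -h

lemma Eop_add_X_mul_Oop (hchar : ringChar k ≠ 2) (g : Polynomial k) :
    Eop k g + X * Oop k g = g := by
  have h2 : (2 : k) ≠ 0 := Ring.two_ne_zero hchar
  rw [X_mul_Oop, Eop, Oop', ← mul_add]
  have h : (g + g.comp (-X)) + (g - g.comp (-X)) = C 2 * g := by
    rw [map_ofNat (Polynomial.C (R := k)) 2]
    ring
  rw [h, ← mul_assoc, ← Polynomial.C_mul, inv_mul_cancel₀ h2, Polynomial.C_1, one_mul]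

lemma Eop_smul (r g : Polynomial k) (hr : r ∈ Rs k) : Eop k (r * g) = r * Eop k g := by
  rw [Eop, Eop, Polynomial.mul_comp, mem_Rs_comp r hr]
  ring

lemma Oop'_smul (r g : Polynomial k) (hr : r ∈ Rs k) : Oop' k (r * g) = r * Oop' k g := by
  rw [Oop', Oop', Polynomial.mul_comp, mem_Rs_comp r hr]
  ring

lemma Oop_smul (r g : Polynomial k) (hr : r ∈ Rs k) : Oop k (r * g) = r * Oop k g := by
  have hX : (X : Polynomial k) ≠ 0 := Polynomial.X_ne_zero
  apply mul_left_cancel₀ hX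
  rw [X_mul_Oop, Oop'_smul r g hr, ← X_mul_Oop, mul_left_comm]

lemma Eop_add (g h : Polynomial k) : Eop k (g + h) = Eop k g + Eop k h := by
  simp [Eop, Polynomial.add_comp]; ring

lemma Oop_add (g h : Polynomial k) : Oop k (g + h) = Oop k g + Oop k h := by
  rw [Oop, Oop, Oop, ← Polynomial.divX_add]
  congr 1
  rw [Oop', Oop', Oop', Polynomial.add_comp]
  ring

lemma Eop_one (hchar : ringChar k ≠ 2) : Eop k 1 = 1 := by
  have h2 : (2 : k) ≠ 0 := Ring.two_ne_zero hchar
  rw [Eop, Polynomial.one_comp]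
  rw [show (1 + 1 : Polynomial k) = C 2 by rw [map_ofNat (Polynomial.C (R := k)) 2]; ring]
  rw [← Polynomial.C_mul, inv_mul_cancel₀ h2, Polynomial.C_1]

lemma Oop_one : Oop k 1 = 0 := by
  rw [Oop, Oop', Polynomial.one_comp, sub_self, mul_zero, Polynomial.divX_zero]

lemma Eop_X : Eop k X = 0 := by
  rw [Eop, Polynomial.X_comp, add_neg_cancel, mul_zero]

lemma Oop_X (hchar : ringChar k ≠ 2) : Oop k X = 1 := by
  have h2 : (2 : k) ≠ 0 := Ring.two_ne_zero hchar
  rw [Oop, Oop', Polynomial.X_comp, sub_neg_eq_add]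
  rw [show ((X + X : Polynomial k)) = C 2 * X by rw [map_ofNat (Polynomial.C (R := k)) 2]; ring]
  rw [← mul_assoc, ← Polynomial.C_mul, inv_mul_cancel₀ h2, Polynomial.C_1, one_mul,
    ← pow_one (X : Polynomial k), Polynomial.divX_X_pow]
  simp

variable (k) in
def ElinMap : Polynomial k →ₗ[Rs k] Polynomial k where
  toFun := Eop k
  map_add' := Eop_add
  map_smul' r g := by
    simp only [RingHom.id_apply, Subalgebra.smul_def, smul_eq_mul]
    exact Eop_smul (r : Polynomial k) g r.2

variable (k) in
def OlinMap : Polynomial k →ₗ[Rs k] Polynomial k where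
  toFun := Oop k
  map_add' := Oop_add
  map_smul' r g := by
    simp only [RingHom.id_apply, Subalgebra.smul_def, smul_eq_mul]
    exact Oop_smul (r : Polynomial k) g r.2

variable (k) in
def phiBil : Polynomial k →ₗ[Rs k] (Bs k →ₗ[Rs k] (Bs k × Bs k)) :=
  LinearMap.mk₂ (Rs k)
    (fun f t => ((f ⊗ₜ[Rs k] (1 : Polynomial k)) * (TensorProduct.map (ElinMap k) LinearMap.id t),
                 (f ⊗ₜ[Rs k] (1 : Polynomial k)) * (TensorProduct.map (OlinMap k) LinearMap.id t)))
    (fun f f' t => by rw [add_tmul]; simp [add_mul])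
    (fun c f t => by rw [← TensorProduct.smul_tmul']; simp [smul_mul_assoc, Prod.smul_mk]; exact ⟨rfl, rfl⟩)
    (fun f t t' => by simp [mul_add])
    (fun c f t => by refine Prod.ext ?_ ?_ <;> exact (congrArg _ (LinearMap.map_smul _ c t)).trans (mul_smul_comm _ _ _))

variable (k) in
def phi : ((Polynomial k) ⊗[Rs k] Bs k) →ₗ[Rs k] (Bs k × Bs k) :=
  TensorProduct.lift (phiBil k)

variable (k) in
def psi : (Bs k × Bs k) →ₗ[Rs k] ((Polynomial k) ⊗[Rs k] Bs k) :=
  LinearMap.coprod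
    (TensorProduct.map LinearMap.id ((TensorProduct.mk (Rs k) (Polynomial k) (Polynomial k)) 1))
    (TensorProduct.map LinearMap.id ((TensorProduct.mk (Rs k) (Polynomial k) (Polynomial k)) X))

lemma phi_tmul (f g h : Polynomial k) :
    phi k (f ⊗ₜ[Rs k] (g ⊗ₜ[Rs k] h))
      = ((f * Eop k g) ⊗ₜ[Rs k] h, (f * Oop k g) ⊗ₜ[Rs k] h) := by
  simp only [phi, TensorProduct.lift.tmul, phiBil, LinearMap.mk₂_apply,
    TensorProduct.map_tmul, LinearMap.id_coe, id_eq,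
    Algebra.TensorProduct.tmul_mul_tmul, one_mul]
  erw [TensorProduct.lift.tmul]
  simp only [LinearMap.mk₂_apply, TensorProduct.map_tmul, LinearMap.id_coe, id_eq,
    Algebra.TensorProduct.tmul_mul_tmul, one_mul]
  rfl

lemma psi_apply (x y : Bs k) :
    psi k (x, y)
      = TensorProduct.map LinearMap.id ((TensorProduct.mk (Rs k) (Polynomial k) (Polynomial k)) 1) x
        + TensorProduct.map LinearMap.id ((TensorProduct.mk (Rs k) (Polynomial k) (Polynomial k)) X) y := rfl

lemma key_identity (hchar : ringChar k ≠ 2) (f g h : Polynomial k) :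
    (f * Eop k g) ⊗ₜ[Rs k] ((1 : Polynomial k) ⊗ₜ[Rs k] h)
      + (f * Oop k g) ⊗ₜ[Rs k] ((X : Polynomial k) ⊗ₜ[Rs k] h)
      = f ⊗ₜ[Rs k] (g ⊗ₜ[Rs k] h) := by
  have hE : Eop k g ∈ Rs k := even_mem_Rs hchar _ (Eop_even g)
  have hO : Oop k g ∈ Rs k := even_mem_Rs hchar _ (Oop_even g)
  have h1 : (f * Eop k g) ⊗ₜ[Rs k] ((1 : Polynomial k) ⊗ₜ[Rs k] h)
      = f ⊗ₜ[Rs k] ((Eop k g) ⊗ₜ[Rs k] h) := by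
    have e1 : f * Eop k g = (⟨Eop k g, hE⟩ : Rs k) • f := by
      simp [Subalgebra.smul_def, smul_eq_mul, mul_comm]
    rw [e1, ← TensorProduct.smul_tmul', ← TensorProduct.tmul_smul]
    congr 1
    erw [TensorProduct.smul_tmul']
    congr 1
    rw [Subalgebra.smul_def, smul_eq_mul, mul_one]
  have h2 : (f * Oop k g) ⊗ₜ[Rs k] ((X : Polynomial k) ⊗ₜ[Rs k] h)
      = f ⊗ₜ[Rs k] ((Oop k g * X) ⊗ₜ[Rs k] h) := by
    have e1 : f * Oop k g = (⟨Oop k g, hO⟩ : Rs k) • f := by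
      simp [Subalgebra.smul_def, smul_eq_mul, mul_comm]
    rw [e1, ← TensorProduct.smul_tmul', ← TensorProduct.tmul_smul]
    congr 1
  rw [h1, h2, ← TensorProduct.tmul_add, ← TensorProduct.add_tmul, mul_comm,
    Eop_add_X_mul_Oop hchar]

lemma phi_comp_psi (hchar : ringChar k ≠ 2) :
    (phi k).comp (psi k) = LinearMap.id := by
  apply LinearMap.ext
  rintro ⟨x, y⟩
  have hx : (phi k) ((psi k) (x, (0 : Bs k))) = (x, (0 : Bs k)) := by
    induction x using TensorProduct.induction_on with
    | zero => rw [Prod.mk_zero_zero]; erw [map_zero]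
    | add a b ha hb =>
      have : ((a + b : Bs k), (0 : Bs k)) = (a, (0:Bs k)) + (b, (0:Bs k)) := by simp
      rw [this, map_add, map_add, ha, hb]
    | tmul a b =>
      rw [psi_apply, TensorProduct.map_tmul, map_zero, add_zero]
      simp only [LinearMap.id_coe, id_eq, TensorProduct.mk_apply]
      erw [phi_tmul]
      rw [Eop_one hchar, Oop_one, mul_one, mul_zero,
        TensorProduct.zero_tmul]
  have hy : (phi k) ((psi k) ((0 : Bs k), y)) = ((0 : Bs k), y) := by
    induction y using TensorProduct.induction_on with
    | zero => rw [Prod.mk_zero_zero]; erw [map_zero]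
    | add a b ha hb =>
      have : ((0 : Bs k), (a + b : Bs k)) = ((0:Bs k), a) + ((0:Bs k), b) := by simp
      rw [this, map_add, map_add, ha, hb]
    | tmul a b =>
      rw [psi_apply, map_zero, zero_add, TensorProduct.map_tmul]
      simp only [LinearMap.id_coe, id_eq, TensorProduct.mk_apply]
      erw [phi_tmul]
      rw [Eop_X, Oop_X hchar, mul_zero, mul_one, TensorProduct.zero_tmul]
  have hxy : (x, y) = (x, (0 : Bs k)) + ((0 : Bs k), y) := by simp
  rw [LinearMap.comp_apply, LinearMap.id_apply, hxy, map_add, map_add, hx, hy]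

lemma psi_comp_phi (hchar : ringChar k ≠ 2) :
    (psi k).comp (phi k) = LinearMap.id := by
  apply TensorProduct.ext' (R := Rs k) (M := Polynomial k) (N := Bs k)
  intro f t
  induction t using TensorProduct.induction_on with
  | zero => simp only [TensorProduct.tmul_zero]; erw [map_zero]
  | add a b ha hb => rw [TensorProduct.tmul_add]; erw [map_add, ha, hb, map_add]
  | tmul g h =>
    change psi k (phi k (f ⊗ₜ[Rs k] (g ⊗ₜ[Rs k] h))) = f ⊗ₜ[Rs k] (g ⊗ₜ[Rs k] h)
    rw [phi_tmul, psi_apply,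
      TensorProduct.map_tmul, TensorProduct.map_tmul]
    simp only [LinearMap.id_coe, id_eq, TensorProduct.mk_apply]
    exact key_identity hchar f g h

variable (k)


/-- B_s ⊗_R B_s ≅ B_s ⊕ B_s as R-bimodules, where B_s ⊗_R B_s is expressed via
the canonical identification B_s ⊗_R B_s = R ⊗_{R^s} R ⊗_{R^s} R; the isomorphism commutes
with the left action of R (multiplication on the leftmost factor) and with the right action
of R (multiplication on the rightmost factor). -/
theorem Bs_squared_decomposition (hchar : ringChar k ≠ 2) :
    ∃ e : ((Polynomial k) ⊗[Rs k] Bs k) ≃ₗ[Rs k] (Bs k × Bs k),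
      (∀ (f : Polynomial k) (x : (Polynomial k) ⊗[Rs k] Bs k),
        e ((f ⊗ₜ[Rs k] (1 : Bs k)) * x)
          = (f ⊗ₜ[Rs k] (1 : Polynomial k), f ⊗ₜ[Rs k] (1 : Polynomial k)) * e x) ∧
      (∀ (f : Polynomial k) (x : (Polynomial k) ⊗[Rs k] Bs k),
        e (((1 : Polynomial k) ⊗ₜ[Rs k] ((1 : Polynomial k) ⊗ₜ[Rs k] f)) * x)
          = ((1 : Polynomial k) ⊗ₜ[Rs k] f, (1 : Polynomial k) ⊗ₜ[Rs k] f) * e x) := by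
  refine ⟨LinearEquiv.ofLinear (phi k) (psi k) (phi_comp_psi hchar) (psi_comp_phi hchar),
    ?_, ?_⟩
  · intro f x
    simp only [LinearEquiv.ofLinear_apply]
    induction x using TensorProduct.induction_on with
    | zero => rw [map_zero, mul_zero]; exact (congrArg (phi k) (mul_zero _)).trans (map_zero _)
    | add x y hx hy => erw [@mul_add (k[X] ⊗[Rs k] Bs k) _ _ (Distrib.leftDistribClass _), map_add, hx, hy, map_add, mul_add]
    | tmul a t =>
      induction t using TensorProduct.induction_on with
      | zero => rw [TensorProduct.tmul_zero, map_zero, mul_zero]; exact (congrArg (phi k) (mul_zero _)).trans (map_zero _)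
      | add t1 t2 h1 h2 =>
        rw [TensorProduct.tmul_add]; erw [@mul_add (k[X] ⊗[Rs k] Bs k) _ _ (Distrib.leftDistribClass _)]; rw [map_add, h1, h2, ← mul_add, ← map_add,
          ← TensorProduct.tmul_add]
      | tmul g h =>
        rw [Algebra.TensorProduct.tmul_mul_tmul, one_mul, phi_tmul, phi_tmul, Prod.mk_mul_mk,
          Algebra.TensorProduct.tmul_mul_tmul, Algebra.TensorProduct.tmul_mul_tmul]
        simp [mul_assoc]
  · intro f x
    simp only [LinearEquiv.ofLinear_apply]
    induction x using TensorProduct.induction_on with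
    | zero => rw [map_zero, mul_zero]; exact (congrArg (phi k) (mul_zero _)).trans (map_zero _)
    | add x y hx hy => erw [@mul_add (k[X] ⊗[Rs k] Bs k) _ _ (Distrib.leftDistribClass _), map_add, hx, hy, map_add, mul_add]
    | tmul a t =>
      induction t using TensorProduct.induction_on with
      | zero => rw [TensorProduct.tmul_zero, map_zero, mul_zero]; exact (congrArg (phi k) (mul_zero _)).trans (map_zero _)
      | add t1 t2 h1 h2 =>
        rw [TensorProduct.tmul_add]; erw [@mul_add (k[X] ⊗[Rs k] Bs k) _ _ (Distrib.leftDistribClass _)]; rw [map_add, h1, h2, ← mul_add, ← map_add,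
          ← TensorProduct.tmul_add]
      | tmul g h =>
        rw [Algebra.TensorProduct.tmul_mul_tmul, one_mul,
          Algebra.TensorProduct.tmul_mul_tmul, one_mul, phi_tmul, phi_tmul, Prod.mk_mul_mk,
          Algebra.TensorProduct.tmul_mul_tmul, Algebra.TensorProduct.tmul_mul_tmul]
        simp [mul_assoc]

end
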